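/- Let 0 < p < 4 and ω² = p/4 with ω ∈ (−1,1). There exist constants C > 0, a₀ ∈ (0,1) and ε₁ > 0 such that for all a ∈ (0, a₀) and all λ ∈ (−1,1) with |λ − ω| ≤ ε₁, one has | S_λ( (1+a)Φ_ω ) − S_λ( Φ_ω ) | ≤ C·( a² + a·|λ − ω| ). -/

import Mathlib

open MeasureTheory Real Filter

/-- The explicit ground state `φ_ω` of `-φ'' + (1-ω²)φ = φ^{p+1}`. -/
noncomputable def phi (p ω : ℝ) : ℝ → ℝ := fun x =>
  ((p + 2) * (1 - ω ^ 2) / 2) ^ (1 / p) *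
    Real.cosh (p / 2 * Real.sqrt (1 - ω ^ 2) * x) ^ (-(2 / p))

/-- Momentum `Q(u,v) = ∫ u v`. -/
noncomputable def Qm (u v : ℝ → ℝ) : ℝ := ∫ x : ℝ, u x * v x

/-- Energy `E(u,v) = ½∫((∂ₓu)² + u² + v²) - (1/(p+2))∫|u|^{p+2}`. -/
noncomputable def En (p : ℝ) (u v : ℝ → ℝ) : ℝ :=
  (1 / 2) * (∫ x : ℝ, ((deriv u x) ^ 2 + (u x) ^ 2 + (v x) ^ 2))
    - (1 / (p + 2)) * ∫ x : ℝ, |u x| ^ (p + 2)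

/-- Action `S_ω = E + ω Q`. -/
noncomputable def Sfun (p ω : ℝ) (u v : ℝ → ℝ) : ℝ := En p u v + ω * Qm u v

open Set Topology


/-- Integrability on `Iic` via reflection. -/
lemma my_integrableOn_comp_neg_Iic {f : ℝ → ℝ} {c : ℝ} (hf : IntegrableOn f (Ici (-c))) :
    IntegrableOn (fun x => f (-x)) (Iic c) := by
  have A : MeasurableEmbedding fun x : ℝ => -x := measurableEmbedding_neg
  have hpre : (fun x : ℝ => -x) ⁻¹' (Ici (-c)) = Iic c := by ext x; simp
  have h1 : (volume : Measure ℝ).restrict (Ici (-c))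
      = Measure.map (fun x : ℝ => -x) ((volume : Measure ℝ).restrict (Iic c)) := by
    rw [← hpre, ← A.restrict_map, Measure.map_neg_eq_self]
  unfold IntegrableOn at *
  rw [h1, A.integrable_map_iff] at hf
  exact hf

/-- `cosh t ≥ e^t / 2`. -/
lemma my_exp_div_two_le_cosh (t : ℝ) : Real.exp t / 2 ≤ Real.cosh t := by
  rw [Real.cosh_eq]
  nlinarith [Real.exp_pos (-t)]

lemma my_sech_rpow_le {s : ℝ} (hs : 0 < s) (t : ℝ) :
    Real.cosh t ^ (-s) ≤ 2 ^ s * Real.exp (-s * t) := by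
  have h2 : Real.cosh t ^ (-s) ≤ (Real.exp t / 2) ^ (-s) :=
    Real.rpow_le_rpow_of_nonpos (by positivity) (my_exp_div_two_le_cosh t)
      (neg_nonpos.mpr hs.le)
  refine h2.trans_eq ?_
  rw [Real.div_rpow (Real.exp_pos t).le (by norm_num : (0:ℝ) ≤ 2), ← Real.exp_mul,
    Real.rpow_neg (by norm_num : (0:ℝ) ≤ 2), div_inv_eq_mul]
  rw [show t * -s = -s * t by ring, mul_comm]

lemma my_integrable_sech {k s : ℝ} (hk : 0 < k) (hs : 0 < s) :
    Integrable (fun x : ℝ => Real.cosh (k * x) ^ (-s)) := by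
  have hcont : Continuous fun x : ℝ => Real.cosh (k * x) ^ (-s) :=
    (Real.continuous_cosh.comp (continuous_const.mul continuous_id)).rpow_const
      (fun x => Or.inl (Real.cosh_pos _).ne')
  have hIoi : IntegrableOn (fun x : ℝ => Real.cosh (k * x) ^ (-s)) (Ioi 0) := by
    refine Integrable.mono' (g := fun x => 2 ^ s * Real.exp (-(s * k) * x))
      (((exp_neg_integrableOn_Ioi 0 (by positivity)).const_mul _))
      hcont.aestronglyMeasurable.restrict ?_
    filter_upwards with x
    rw [Real.norm_eq_abs, abs_of_pos (Real.rpow_pos_of_pos (Real.cosh_pos _) _)]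
    have := my_sech_rpow_le hs (k * x)
    calc Real.cosh (k * x) ^ (-s) ≤ 2 ^ s * Real.exp (-s * (k * x)) := this
      _ = 2 ^ s * Real.exp (-(s * k) * x) := by ring_nf
  have hIci : IntegrableOn (fun x : ℝ => Real.cosh (k * x) ^ (-s)) (Ici (-(0:ℝ))) := by
    rw [neg_zero, integrableOn_Ici_iff_integrableOn_Ioi]
    exact hIoi
  have hIic : IntegrableOn (fun x : ℝ => Real.cosh (k * x) ^ (-s)) (Iic 0) := by
    have := my_integrableOn_comp_neg_Iic hIci
    simpa [mul_neg, Real.cosh_neg] using this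
  rw [← integrableOn_univ, ← Set.Iic_union_Ioi (a := (0:ℝ))]
  exact hIic.union hIoi

section sec2
variable {k s : ℝ}

lemma my_hasDerivAt_linear (k x : ℝ) : HasDerivAt (fun y : ℝ => k * y) k x := by
  simpa using (hasDerivAt_id x).const_mul k

lemma my_hasDerivAt_cosh_comp (k x : ℝ) :
    HasDerivAt (fun y : ℝ => Real.cosh (k * y)) (Real.sinh (k * x) * k) x :=
  (Real.hasDerivAt_cosh (k * x)).comp x (my_hasDerivAt_linear k x)

lemma my_hasDerivAt_sech_rpow (k r : ℝ) (x : ℝ) :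
    HasDerivAt (fun y : ℝ => Real.cosh (k * y) ^ r)
      (Real.sinh (k * x) * k * r * Real.cosh (k * x) ^ (r - 1)) x :=
  (my_hasDerivAt_cosh_comp k x).rpow_const (Or.inl (Real.cosh_pos _).ne')

/-- rpow addition for cosh base -/
lemma my_cosh_rpow_add (t a b : ℝ) :
    Real.cosh t ^ (a + b) = Real.cosh t ^ a * Real.cosh t ^ b :=
  Real.rpow_add (Real.cosh_pos t) a b

/-- The derivative of `F x = sinh(kx) * cosh(kx)^(-(s+1))`. -/
lemma my_hasDerivAt_F (k s : ℝ) (x : ℝ) :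
    HasDerivAt (fun y : ℝ => Real.sinh (k * y) * Real.cosh (k * y) ^ (-(s + 1)))
      (k * (s + 1) * Real.cosh (k * x) ^ (-(s + 1) - 1)
        - k * s * Real.cosh (k * x) ^ (-s)) x := by
  have h1 : HasDerivAt (fun y : ℝ => Real.sinh (k * y)) (Real.cosh (k * x) * k) x :=
    (Real.hasDerivAt_sinh (k * x)).comp x (my_hasDerivAt_linear k x)
  have h2 := my_hasDerivAt_sech_rpow k (-(s + 1)) x
  have h : HasDerivAt (fun y : ℝ => Real.sinh (k * y) * Real.cosh (k * y) ^ (-(s + 1)))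
      (Real.cosh (k * x) * k * Real.cosh (k * x) ^ (-(s + 1)) + Real.sinh (k * x) *
        (Real.sinh (k * x) * k * (-(s + 1)) * Real.cosh (k * x) ^ (-(s + 1) - 1))) x := h1.mul h2
  convert h using 1
  have hc := Real.cosh_pos (k * x)
  have e1 : Real.cosh (k * x) * k * Real.cosh (k * x) ^ (-(s + 1))
      = k * Real.cosh (k * x) ^ (-s) := by
    rw [show (-s : ℝ) = 1 + -(s+1) by ring, my_cosh_rpow_add, Real.rpow_one]
    ring
  have e2 : Real.sinh (k * x) * (Real.sinh (k * x) * k * (-(s + 1)) *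
        Real.cosh (k * x) ^ (-(s + 1) - 1))
      = -(s+1) * k * ((Real.cosh (k * x) ^ 2 - 1) * Real.cosh (k * x) ^ (-(s + 1) - 1)) := by
    rw [← Real.sinh_sq]
    ring
  have e3 : (Real.cosh (k * x) ^ 2 - 1) * Real.cosh (k * x) ^ (-(s + 1) - 1)
      = Real.cosh (k * x) ^ (-s) - Real.cosh (k * x) ^ (-(s+1) - 1) := by
    rw [sub_mul, one_mul, ← Real.rpow_natCast (Real.cosh (k*x)) 2,
      ← my_cosh_rpow_add, show ((2:ℕ):ℝ) + (-(s + 1) - 1) = -s by push_cast; ring]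
  rw [e1, e2, e3]
  ring

lemma my_F_tendsto_atTop (hk : 0 < k) (hs : 0 < s) :
    Tendsto (fun x : ℝ => Real.sinh (k * x) * Real.cosh (k * x) ^ (-(s + 1))) atTop (𝓝 0) := by
  have habs : ∀ x : ℝ, |Real.sinh (k * x) * Real.cosh (k * x) ^ (-(s + 1))|
      ≤ 2 ^ s * Real.exp (-(s * k) * x) := by
    intro x
    have hc := Real.cosh_pos (k * x)
    rw [abs_mul, abs_of_pos (Real.rpow_pos_of_pos hc _)]
    have h1 : |Real.sinh (k * x)| ≤ Real.cosh (k * x) := by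
      rcases abs_cases (Real.sinh (k*x)) with ⟨h, _⟩ | ⟨h, _⟩ <;> rw [h]
      · exact (Real.sinh_lt_cosh (k*x)).le
      · nlinarith [Real.sinh_lt_cosh (-(k*x)), Real.sinh_neg (k*x), Real.cosh_neg (k*x)]
    calc |Real.sinh (k * x)| * Real.cosh (k * x) ^ (-(s + 1))
        ≤ Real.cosh (k * x) * Real.cosh (k * x) ^ (-(s + 1)) := by
          exact mul_le_mul_of_nonneg_right h1 (Real.rpow_pos_of_pos hc _).le
      _ = Real.cosh (k * x) ^ (-s) := by
          nth_rewrite 1 [← Real.rpow_one (Real.cosh (k*x))]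
          rw [← my_cosh_rpow_add, show (1 + -(s+1) : ℝ) = -s by ring]
      _ ≤ 2 ^ s * Real.exp (-s * (k * x)) := my_sech_rpow_le hs (k * x)
      _ = 2 ^ s * Real.exp (-(s * k) * x) := by ring_nf
  have hbnd : Tendsto (fun x : ℝ => 2 ^ s * Real.exp (-(s * k) * x)) atTop (𝓝 0) := by
    have hlin : Tendsto (fun x : ℝ => s * k * x) atTop atTop :=
      Tendsto.const_mul_atTop (by positivity) tendsto_id
    have h0 : Tendsto (fun x : ℝ => -(s * k * x)) atTop atBot := by
      exact tendsto_neg_atTop_atBot.comp hlin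
    have := (Real.tendsto_exp_atBot.comp h0).const_mul ((2:ℝ) ^ s)
    simpa [neg_mul, Function.comp_def, mul_comm] using this
  refine squeeze_zero_norm (fun x => ?_) hbnd
  rw [Real.norm_eq_abs]
  exact habs x

lemma my_F_tendsto_atBot {k s : ℝ} (hk : 0 < k) (hs : 0 < s) :
    Tendsto (fun x : ℝ => Real.sinh (k * x) * Real.cosh (k * x) ^ (-(s + 1))) atBot (𝓝 0) := by
  have h := (my_F_tendsto_atTop hk hs).comp tendsto_neg_atBot_atTop
  have heq : (fun x : ℝ => Real.sinh (k * x) * Real.cosh (k * x) ^ (-(s + 1)))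
      = fun x : ℝ => -((fun y : ℝ => Real.sinh (k * y) * Real.cosh (k * y) ^ (-(s + 1))) (-x)) := by
    funext x
    simp [mul_neg, Real.sinh_neg, Real.cosh_neg]
  rw [heq]
  simpa using h.neg

lemma my_sech_integral_identity {k s : ℝ} (hk : 0 < k) (hs : 0 < s) :
    ∫ x : ℝ, Real.cosh (k * x) ^ (-(s + 1) - 1)
      = (s / (s + 1)) * ∫ x : ℝ, Real.cosh (k * x) ^ (-s) := by
  have hintA : Integrable (fun x : ℝ => Real.cosh (k * x) ^ (-(s + 1) - 1)) := by
    have := my_integrable_sech hk (by linarith : (0:ℝ) < s + 2)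
    simpa only [show (-(s + 2) : ℝ) = -(s+1) - 1 from by ring] using this
  have hintB : Integrable (fun x : ℝ => Real.cosh (k * x) ^ (-s)) :=
    my_integrable_sech hk hs
  have hGint : Integrable (fun x : ℝ => k * (s + 1) * Real.cosh (k * x) ^ (-(s + 1) - 1)
      - k * s * Real.cosh (k * x) ^ (-s)) :=
    (hintA.const_mul _).sub (hintB.const_mul _)
  have h1 : ∫ x in Iic (0:ℝ), (k * (s + 1) * Real.cosh (k * x) ^ (-(s + 1) - 1)
      - k * s * Real.cosh (k * x) ^ (-s))
      = Real.sinh (k * 0) * Real.cosh (k * 0) ^ (-(s + 1)) - 0 :=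
    integral_Iic_of_hasDerivAt_of_tendsto' (fun x _ => my_hasDerivAt_F k s x)
      hGint.integrableOn (my_F_tendsto_atBot hk hs)
  have h2 : ∫ x in Ioi (0:ℝ), (k * (s + 1) * Real.cosh (k * x) ^ (-(s + 1) - 1)
      - k * s * Real.cosh (k * x) ^ (-s))
      = 0 - Real.sinh (k * 0) * Real.cosh (k * 0) ^ (-(s + 1)) :=
    integral_Ioi_of_hasDerivAt_of_tendsto' (fun x _ => my_hasDerivAt_F k s x)
      hGint.integrableOn (my_F_tendsto_atTop hk hs)
  have h3 : ∫ x : ℝ, (k * (s + 1) * Real.cosh (k * x) ^ (-(s + 1) - 1)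
      - k * s * Real.cosh (k * x) ^ (-s)) = 0 := by
    rw [← intervalIntegral.integral_Iic_add_Ioi hGint.integrableOn hGint.integrableOn, h1, h2]
    ring
  rw [integral_sub (hintA.const_mul _) (hintB.const_mul _), integral_const_mul,
    integral_const_mul] at h3
  have hs1 : s + 1 ≠ 0 := by linarith
  have hk0 : k ≠ 0 := hk.ne'
  set A := ∫ x : ℝ, Real.cosh (k * x) ^ (-(s + 1) - 1) with hAdef
  set B := ∫ x : ℝ, Real.cosh (k * x) ^ (-s) with hBdef
  have h4 : (s + 1) * A = s * B := by
    have h5 : k * ((s + 1) * A - s * B) = 0 := by ring_nf; ring_nf at h3; linarith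
    rcases mul_eq_zero.mp h5 with h | h
    · exact absurd h hk0
    · linarith
  rw [div_mul_eq_mul_div, eq_div_iff hs1]
  linarith [h4]

end sec2

lemma my_g_bound {q a : ℝ} (hq1 : 2 ≤ q) (hq2 : q ≤ 6) (ha : 0 < a) (ha1 : a < 1) :
    |(1 + a) ^ q - 1 - q * a| ≤ 186 * a ^ 2 := by
  have hcont : ContinuousOn (fun t : ℝ => (1 + t) ^ q - 1 - q * t) (Icc 0 a) := by
    apply ContinuousOn.sub
    apply ContinuousOn.sub
    · exact ((continuous_const.add continuous_id).rpow_const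
        (fun x => Or.inr (by linarith))).continuousOn
    · exact continuousOn_const
    · exact (continuous_const.mul continuous_id).continuousOn
  have hder : ∀ t ∈ Ioo (0:ℝ) a, HasDerivAt (fun t : ℝ => (1 + t) ^ q - 1 - q * t)
      (q * (1 + t) ^ (q - 1) - q) t := by
    intro t ht
    have h1 : HasDerivAt (fun t : ℝ => (1 + t)) 1 t := (hasDerivAt_id t).const_add 1
    have h2 := h1.rpow_const (p := q) (Or.inl (by nlinarith [ht.1] : (1:ℝ) + t ≠ 0))
    have h3 : HasDerivAt (fun t : ℝ => q * t) q t := by simpa using (hasDerivAt_id t).const_mul q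
    have h4 : HasDerivAt (fun t : ℝ => (1 + t) ^ q - 1 - q * t)
        (1 * q * (1 + t) ^ (q - 1) - q) t := (h2.sub_const 1).sub h3
    simpa using h4
  obtain ⟨c, hc, hceq⟩ := exists_hasDerivAt_eq_slope (fun t : ℝ => (1 + t) ^ q - 1 - q * t)
    (fun t => q * (1 + t) ^ (q - 1) - q) ha hcont hder
  have hf0 : (1 + (0:ℝ)) ^ q - 1 - q * 0 = 0 := by
    norm_num
  rw [hf0, sub_zero] at hceq
  have hcpos : 0 < c := hc.1
  have hca : c < a := hc.2
  have h1c : (1:ℝ) ≤ 1 + c := by linarith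
  have hup : (1 + c) ^ (q - 1) ≤ 1 + 31 * c := by
    have h5 : (1 + c) ^ (q - 1) ≤ (1 + c) ^ ((5:ℕ) : ℝ) :=
      Real.rpow_le_rpow_of_exponent_le h1c (by push_cast; linarith)
    rw [Real.rpow_natCast] at h5
    have hc1 : c ≤ 1 := by linarith
    have e2 : c ^ 2 ≤ c := by nlinarith
    have e3 : c ^ 3 ≤ c := by nlinarith
    have e4 : c ^ 4 ≤ c := by nlinarith [sq_nonneg (c ^ 2 - c)]
    have e5 : c ^ 5 ≤ c := by nlinarith [e4, mul_le_mul_of_nonneg_left hc1 (pow_nonneg hcpos.le 4)]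
    nlinarith [h5]
  have hlo : (1:ℝ) ≤ (1 + c) ^ (q - 1) := by
    have := Real.rpow_le_rpow_of_exponent_le h1c (le_of_lt (by linarith : (0:ℝ) < q - 1))
    rwa [Real.rpow_zero] at this
  have hslope : |q * (1 + c) ^ (q - 1) - q| ≤ 186 * a := by
    rw [abs_of_nonneg (by nlinarith)]
    nlinarith
  have := hceq ▸ hslope
  calc |(1 + a) ^ q - 1 - q * a| = |(((1 + a) ^ q - 1 - q * a) / (a - 0))| * |a - 0| := by
        rw [← abs_mul, div_mul_cancel₀]
        simp [ha.ne']
    _ ≤ (186 * a) * |a - 0| := by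
        apply mul_le_mul_of_nonneg_right _ (abs_nonneg _)
        rw [← hceq]
        exact hslope
    _ = 186 * a ^ 2 := by
        rw [sub_zero, abs_of_pos ha]; ring

noncomputable def kk (p ω : ℝ) : ℝ := p / 2 * Real.sqrt (1 - ω ^ 2)
noncomputable def BB (p ω : ℝ) : ℝ := (p + 2) * (1 - ω ^ 2) / 2

lemma phi_eq (p ω : ℝ) :
    phi p ω = fun x => BB p ω ^ (1 / p) * Real.cosh (kk p ω * x) ^ (-(2 / p)) := rfl

lemma my_rpow_sq {x : ℝ} (hx : 0 ≤ x) (y : ℝ) : (x ^ y) ^ (2:ℕ) = x ^ (y * 2) := by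
  rw [Real.rpow_mul hx, show (2:ℝ) = ((2:ℕ):ℝ) by norm_num, Real.rpow_natCast]

section phiFacts
variable {p ω : ℝ} (hp : 0 < p) (hω : ω ^ 2 < 1)

include hp hω

lemma hk_pos : 0 < kk p ω := by
  have h1 : 0 < 1 - ω ^ 2 := by linarith
  have := Real.sqrt_pos.mpr h1
  unfold kk
  positivity

lemma hB_pos : 0 < BB p ω := by
  have h1 : 0 < 1 - ω ^ 2 := by linarith
  unfold BB
  positivity

lemma hk_sq : kk p ω ^ 2 = p ^ 2 / 4 * (1 - ω ^ 2) := by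
  have h1 : (0:ℝ) ≤ 1 - ω ^ 2 := by linarith
  unfold kk
  rw [mul_pow, Real.sq_sqrt h1]
  ring

lemma phi_hasDerivAt (x : ℝ) :
    HasDerivAt (phi p ω)
      (BB p ω ^ (1 / p) * (Real.sinh (kk p ω * x) * kk p ω * (-(2 / p)) *
        Real.cosh (kk p ω * x) ^ (-(2 / p) - 1))) x := by
  rw [phi_eq]
  exact (my_hasDerivAt_sech_rpow (kk p ω) (-(2 / p)) x).const_mul _

lemma phi_deriv (x : ℝ) :
    deriv (phi p ω) x = BB p ω ^ (1 / p) * (Real.sinh (kk p ω * x) * kk p ω * (-(2 / p)) *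
      Real.cosh (kk p ω * x) ^ (-(2 / p) - 1)) :=
  (phi_hasDerivAt hp hω x).deriv

lemma phi_sq (x : ℝ) :
    (phi p ω x) ^ 2 = BB p ω ^ (2 / p) * Real.cosh (kk p ω * x) ^ (-(4 / p)) := by
  have hB := (hB_pos hp hω).le
  have hc := (Real.cosh_pos (kk p ω * x)).le
  rw [phi_eq]
  simp only
  rw [mul_pow, my_rpow_sq hB, my_rpow_sq hc]
  rw [show 1 / p * 2 = 2 / p by ring, show -(2 / p) * 2 = -(4 / p) by ring]

lemma phi_abs_rpow (x : ℝ) :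
    |phi p ω x| ^ (p + 2)
      = BB p ω ^ ((p + 2) / p) * Real.cosh (kk p ω * x) ^ (-(4 / p + 1) - 1) := by
  have hB := hB_pos hp hω
  have hc := Real.cosh_pos (kk p ω * x)
  have hphipos : 0 < phi p ω x := by
    rw [phi_eq]
    exact mul_pos (Real.rpow_pos_of_pos hB _) (Real.rpow_pos_of_pos hc _)
  rw [abs_of_pos hphipos, phi_eq]
  simp only
  rw [Real.mul_rpow (Real.rpow_pos_of_pos hB _).le (Real.rpow_pos_of_pos hc _).le,
    ← Real.rpow_mul hB.le, ← Real.rpow_mul hc.le]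
  congr 1
  · congr 1
    field_simp
  · congr 1
    field_simp
    ring

lemma phi_deriv_sq (x : ℝ) :
    (deriv (phi p ω) x) ^ 2
      = (1 - ω ^ 2) * (phi p ω x) ^ 2 - (2 / (p + 2)) * |phi p ω x| ^ (p + 2) := by
  have hB := hB_pos hp hω
  have hc := Real.cosh_pos (kk p ω * x)
  have hp2 : p + 2 ≠ 0 := by linarith
  rw [phi_deriv hp hω x, phi_sq hp hω x, phi_abs_rpow hp hω x,
    mul_pow, mul_pow, mul_pow, mul_pow, my_rpow_sq hB.le, my_rpow_sq hc.le,
    Real.sinh_sq, hk_sq hp hω]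
  have hsplit : BB p ω ^ ((p + 2) / p) = BB p ω * BB p ω ^ (2 / p) := by
    rw [show (p + 2) / p = 1 + 2 / p by field_simp, Real.rpow_add hB, Real.rpow_one]
  have hcosh2 : Real.cosh (kk p ω * x) ^ (2:ℕ) * Real.cosh (kk p ω * x) ^ ((-(2 / p) - 1) * 2)
      = Real.cosh (kk p ω * x) ^ (-(4 / p)) := by
    rw [← Real.rpow_natCast (Real.cosh (kk p ω * x)) 2, ← Real.rpow_add hc]
    congr 1
    push_cast
    field_simp
    ring
  have hcoshE : Real.cosh (kk p ω * x) ^ (-(4 / p + 1) - 1)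
      = Real.cosh (kk p ω * x) ^ ((-(2 / p) - 1) * 2) := by
    congr 1
    field_simp
    ring
  rw [hsplit, hcoshE, show 1 / p * 2 = 2 / p by ring, ← hcosh2]
  unfold BB
  field_simp
  ring

end phiFacts


/-- At the critical frequency `ω² = p/4`:
`|S_λ((1+a)Φ_ω) - S_λ(Φ_ω)| ≤ C(a² + a|λ-ω|)` for small `a > 0` and `λ`
close to `ω`. -/
theorem action_difference_estimate (p ω : ℝ) (hp : 0 < p) (hp4 : p < 4)
    (hω1 : -1 < ω) (hω2 : ω < 1) (hcrit : ω ^ 2 = p / 4) :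
    ∃ C > 0, ∃ a₀ : ℝ, 0 < a₀ ∧ a₀ < 1 ∧ ∃ ε₁ > 0,
      ∀ a : ℝ, 0 < a → a < a₀ → ∀ l : ℝ, -1 < l → l < 1 → |l - ω| ≤ ε₁ →
        |Sfun p l (fun x => (1 + a) * phi p ω x)
            (fun x => -(1 + a) * ω * phi p ω x)
          - Sfun p l (phi p ω) (fun x => -ω * phi p ω x)|
        ≤ C * (a ^ 2 + a * |l - ω|) := by
  have hω2lt : ω ^ 2 < 1 := by nlinarith
  have h1ω : 0 < 1 - ω ^ 2 := by linarith
  have hk := hk_pos (p := p) (ω := ω) hp hω2lt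
  have hB := hB_pos (p := p) (ω := ω) hp hω2lt
  have hp2 : (0:ℝ) < p + 2 := by linarith
  have hp2' : (p:ℝ) + 2 ≠ 0 := hp2.ne'
  have hp0 : (p:ℝ) ≠ 0 := hp.ne'
  have hs4 : (0:ℝ) < 4 / p := by positivity
  set I0 := ∫ x : ℝ, (phi p ω x) ^ 2 with hI0def
  set P := ∫ x : ℝ, |phi p ω x| ^ (p + 2) with hPdef
  have hsq : (fun x : ℝ => (phi p ω x) ^ 2)
      = fun x => BB p ω ^ (2 / p) * Real.cosh (kk p ω * x) ^ (-(4 / p)) :=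
    funext fun x => phi_sq hp hω2lt x
  have habsr : (fun x : ℝ => |phi p ω x| ^ (p + 2))
      = fun x => BB p ω ^ ((p + 2) / p) * Real.cosh (kk p ω * x) ^ (-(4 / p + 1) - 1) :=
    funext fun x => phi_abs_rpow hp hω2lt x
  have hintsech : Integrable (fun x : ℝ => Real.cosh (kk p ω * x) ^ (-(4 / p))) :=
    my_integrable_sech hk hs4
  have hintsech2 : Integrable (fun x : ℝ => Real.cosh (kk p ω * x) ^ (-(4 / p + 1) - 1)) := by
    have := my_integrable_sech hk (show (0:ℝ) < 4 / p + 2 by positivity)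
    simpa only [show -(4 / p + 2) = -(4 / p + 1) - 1 from by ring] using this
  have hint0 : Integrable (fun x : ℝ => (phi p ω x) ^ 2) := by
    rw [hsq]; exact hintsech.const_mul _
  have hintP : Integrable (fun x : ℝ => |phi p ω x| ^ (p + 2)) := by
    rw [habsr]; exact hintsech2.const_mul _
  have hJid := my_sech_integral_identity hk hs4
  have hI0J : I0 = BB p ω ^ (2 / p) * ∫ x : ℝ, Real.cosh (kk p ω * x) ^ (-(4 / p)) := by
    rw [hI0def, hsq, integral_const_mul]
  have hPJ : P = BB p ω ^ ((p + 2) / p)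
      * ((4 / p) / (4 / p + 1) * ∫ x : ℝ, Real.cosh (kk p ω * x) ^ (-(4 / p))) := by
    rw [hPdef, habsr, integral_const_mul, hJid]
  have hsplit : BB p ω ^ ((p + 2) / p) = BB p ω * BB p ω ^ (2 / p) := by
    rw [show (p + 2) / p = 1 + 2 / p by field_simp, Real.rpow_add hB, Real.rpow_one]
  have hp4' : (0:ℝ) < p + 4 := by linarith
  have hP : P = (2 * (p + 2) * (1 - ω ^ 2) / (p + 4)) * I0 := by
    rw [hPJ, hsplit, hI0J]
    have h41 : 4 / p + 1 ≠ 0 := by positivity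
    unfold BB
    field_simp
    ring
  set T := ∫ x : ℝ, ((deriv (phi p ω) x) ^ 2 + (phi p ω x) ^ 2 + (-ω * phi p ω x) ^ 2)
    with hTdef
  have hTval : T = 2 * I0 - (2 / (p + 2)) * P := by
    rw [hTdef]
    have heq : (fun x : ℝ => (deriv (phi p ω) x) ^ 2 + (phi p ω x) ^ 2 + (-ω * phi p ω x) ^ 2)
        = fun x => 2 * (phi p ω x) ^ 2 - (2 / (p + 2)) * |phi p ω x| ^ (p + 2) := by
      funext x; rw [phi_deriv_sq hp hω2lt x]; ring
    rw [heq, integral_sub (hint0.const_mul 2) (hintP.const_mul _), integral_const_mul,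
      integral_const_mul, ← hI0def, ← hPdef]
  have hT : T = P + 2 * ω ^ 2 * I0 := by
    rw [hTval, hP]
    field_simp
    ring
  have hQbase : Qm (phi p ω) (fun x => -ω * phi p ω x) = -ω * I0 := by
    unfold Qm
    rw [show (fun x : ℝ => phi p ω x * (-ω * phi p ω x)) = fun x => -ω * (phi p ω x) ^ 2 from
      funext fun x => by ring, integral_const_mul, ← hI0def]
  have hEbase : En p (phi p ω) (fun x => -ω * phi p ω x) = 1 / 2 * T - 1 / (p + 2) * P := by
    unfold En
    simp only
    rfl
  clear_value I0 P T
  refine ⟨100 * (|P| + 1) + 3 * (|I0| + 1), by positivity, 1/2, by norm_num, by norm_num,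
    1, by norm_num, ?_⟩
  intro a ha ha2 l hl1 hl2 hlω
  have ha1 : (0:ℝ) < 1 + a := by linarith
  have hderiva : ∀ x : ℝ, deriv (fun y => (1 + a) * phi p ω y) x
      = (1 + a) * deriv (phi p ω) x := fun x =>
    deriv_const_mul (1 + a) (phi_hasDerivAt hp hω2lt x).differentiableAt
  have hE1 : (∫ x : ℝ, ((deriv (fun y => (1 + a) * phi p ω y) x) ^ 2
        + ((1 + a) * phi p ω x) ^ 2 + (-(1 + a) * ω * phi p ω x) ^ 2))
      = (1 + a) ^ 2 * T := by
    have heq : (fun x : ℝ => (deriv (fun y => (1 + a) * phi p ω y) x) ^ 2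
          + ((1 + a) * phi p ω x) ^ 2 + (-(1 + a) * ω * phi p ω x) ^ 2)
        = fun x => (1 + a) ^ 2 * ((deriv (phi p ω) x) ^ 2 + (phi p ω x) ^ 2
          + (-ω * phi p ω x) ^ 2) := by
      funext x; rw [hderiva x]; ring
    rw [heq, integral_const_mul, ← hTdef]
  have hE2 : (∫ x : ℝ, |(1 + a) * phi p ω x| ^ (p + 2)) = (1 + a) ^ (p + 2) * P := by
    have heq : (fun x : ℝ => |(1 + a) * phi p ω x| ^ (p + 2))
        = fun x => (1 + a) ^ (p + 2) * |phi p ω x| ^ (p + 2) := by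
      funext x
      rw [abs_mul, abs_of_pos ha1, Real.mul_rpow ha1.le (abs_nonneg _)]
    rw [heq, integral_const_mul, ← hPdef]
  have hQs : Qm (fun x => (1 + a) * phi p ω x) (fun x => -(1 + a) * ω * phi p ω x)
      = -((1 + a) ^ 2 * ω) * I0 := by
    unfold Qm
    rw [show (fun x : ℝ => ((1 + a) * phi p ω x) * (-(1 + a) * ω * phi p ω x))
        = fun x => -((1 + a) ^ 2 * ω) * (phi p ω x) ^ 2 from funext fun x => by ring,
      integral_const_mul, ← hI0def]
  have hEs : En p (fun x => (1 + a) * phi p ω x) (fun x => -(1 + a) * ω * phi p ω x)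
      = 1 / 2 * ((1 + a) ^ 2 * T) - 1 / (p + 2) * ((1 + a) ^ (p + 2) * P) := by
    unfold En
    simp only
    rw [hE1, hE2]
  have hSs : Sfun p l (fun x => (1 + a) * phi p ω x) (fun x => -(1 + a) * ω * phi p ω x)
      = 1 / 2 * ((1 + a) ^ 2 * T) - 1 / (p + 2) * ((1 + a) ^ (p + 2) * P)
        + l * (-((1 + a) ^ 2 * ω) * I0) := by
    unfold Sfun
    rw [hEs, hQs]
  have hSb : Sfun p l (phi p ω) (fun x => -ω * phi p ω x)
      = 1 / 2 * T - 1 / (p + 2) * P + l * (-ω * I0) := by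
    unfold Sfun
    rw [hEbase, hQbase]
  have hD : Sfun p l (fun x => (1 + a) * phi p ω x) (fun x => -(1 + a) * ω * phi p ω x)
      - Sfun p l (phi p ω) (fun x => -ω * phi p ω x)
      = a ^ 2 * (P / 2) + (2 * a + a ^ 2) * (ω * (ω - l)) * I0
        - ((1 + a) ^ (p + 2) - 1 - (p + 2) * a) * (P / (p + 2)) := by
    rw [hSs, hSb, hT]
    field_simp
    ring
  rw [hD]
  clear hD hSs hSb hEs hQs hE2 hE1 hderiva hEbase hQbase hT hTval hP hsplit hPJ hI0J hJid
  clear hintP hint0 hintsech2 hintsech habsr hsq hTdef hPdef hI0def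
  -- bounds
  have gbnd : |(1 + a) ^ (p + 2) - 1 - (p + 2) * a| ≤ 186 * a ^ 2 :=
    my_g_bound (by linarith) (by linarith) ha (by linarith)
  have t3bnd : |((1 + a) ^ (p + 2) - 1 - (p + 2) * a) * (P / (p + 2))|
      ≤ 186 * a ^ 2 * (|P| / 2) := by
    rw [abs_mul]
    have h1 : |P / (p + 2)| ≤ |P| / 2 := by
      rw [abs_div, abs_of_pos hp2]
      gcongr
      · linarith
    exact mul_le_mul gbnd h1 (abs_nonneg _) (by positivity)
  have habsω : |ω| ≤ 1 := abs_le.mpr ⟨hω1.le, hω2.le⟩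
  have h2a : (0:ℝ) < 2 * a + a ^ 2 := by positivity
  have t2bnd : |(2 * a + a ^ 2) * (ω * (ω - l)) * I0| ≤ 3 * a * |l - ω| * |I0| := by
    rw [abs_mul, abs_mul, abs_of_pos h2a]
    have hωl : |ω * (ω - l)| ≤ |l - ω| := by
      rw [abs_mul, abs_sub_comm]
      exact mul_le_of_le_one_left (abs_nonneg _) habsω
    have h2a3 : 2 * a + a ^ 2 ≤ 3 * a := by nlinarith [ha, ha2]
    apply mul_le_mul_of_nonneg_right _ (abs_nonneg I0)
    calc (2 * a + a ^ 2) * |ω * (ω - l)| ≤ (3 * a) * |l - ω| :=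
          mul_le_mul h2a3 hωl (abs_nonneg _) (by positivity)
      _ = 3 * a * |l - ω| := by ring
  have t1bnd : |a ^ 2 * (P / 2)| = a ^ 2 * (|P| / 2) := by
    rw [abs_mul, abs_of_pos (by positivity : (0:ℝ) < a ^ 2), abs_div, abs_two]
  have tri : |a ^ 2 * (P / 2) + (2 * a + a ^ 2) * (ω * (ω - l)) * I0
      - ((1 + a) ^ (p + 2) - 1 - (p + 2) * a) * (P / (p + 2))|
      ≤ |a ^ 2 * (P / 2)| + |(2 * a + a ^ 2) * (ω * (ω - l)) * I0|
        + |((1 + a) ^ (p + 2) - 1 - (p + 2) * a) * (P / (p + 2))| := by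
    have h1 := abs_add_le (a ^ 2 * (P / 2)) ((2 * a + a ^ 2) * (ω * (ω - l)) * I0)
    have h2 := abs_add_le (a ^ 2 * (P / 2) + (2 * a + a ^ 2) * (ω * (ω - l)) * I0)
      (-(((1 + a) ^ (p + 2) - 1 - (p + 2) * a) * (P / (p + 2))))
    rw [abs_neg] at h2
    rw [sub_eq_add_neg]
    linarith
  have hfin := tri.trans (by linarith [t1bnd, t2bnd, t3bnd] :
    |a ^ 2 * (P / 2)| + |(2 * a + a ^ 2) * (ω * (ω - l)) * I0|
      + |((1 + a) ^ (p + 2) - 1 - (p + 2) * a) * (P / (p + 2))|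
      ≤ a ^ 2 * (|P| / 2) + 3 * a * |l - ω| * |I0| + 186 * a ^ 2 * (|P| / 2))
  refine hfin.trans ?_
  have hx1 : (0:ℝ) ≤ a ^ 2 := sq_nonneg a
  have hx2 : (0:ℝ) ≤ a * |l - ω| := by positivity
  nlinarith [mul_nonneg hx1 (abs_nonneg P), mul_nonneg hx2 (abs_nonneg I0),
    abs_nonneg P, abs_nonneg I0, hx1, hx2]
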